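/- Let H₀(x,y) = (ω/ε)S(x,y) + (1/2)(N(x) - Q(y) + Q(y)²) with N(x)=x₁²+x₂², Q(y)=y₁²+y₂², S(x,y)=x₁y₂-x₂y₁, and let Γ₀(u,θ) = (δ₀(u,θ), γ₀(u,θ)) with γ₀(u,θ) = (cos θ/cosh u, sin θ/cosh u) and δ₀(u,θ) = ((sinh u/cosh²u)cos θ, (sinh u/cosh²u)sin θ). Then H₀(Γ₀(u,θ)) = 0 for all (u,θ), and the curve t ↦ Γ₀(u+t, θ + (ω/ε)t) is a solution of the Hamiltonian system associated with H₀ (with symplectic form dx₁∧dy₁ + dx₂∧dy₂). -/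

import Mathlib

/-- r(u) = 1/cosh u. -/
noncomputable def rHom (u : ℝ) : ℝ := 1 / Real.cosh u

/-- R(u) = sinh u/cosh² u. -/
noncomputable def RHom (u : ℝ) : ℝ := Real.sinh u / Real.cosh u ^ 2

/-- The truncated normal form Hamiltonian
H₀(x,y) = (ω/ε)S + (1/2)(N - Q + Q²). -/
noncomputable def H0 (ω ε : ℝ) (x y : ℝ × ℝ) : ℝ :=
  (ω / ε) * (x.1 * y.2 - x.2 * y.1)
    + (1/2) * ((x.1^2 + x.2^2) - (y.1^2 + y.2^2) + (y.1^2 + y.2^2)^2)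

lemma cosh_ne (x : ℝ) : Real.cosh x ≠ 0 := (Real.cosh_pos x).ne'

lemma hasDerivAt_rHom (x : ℝ) : HasDerivAt rHom (-RHom x) x := by
  have h := (hasDerivAt_const x (1:ℝ)).div (Real.hasDerivAt_cosh x) (cosh_ne x)
  refine h.congr_deriv ?_
  symm
  unfold RHom
  field_simp
  ring

lemma hasDerivAt_RHom (x : ℝ) : HasDerivAt RHom (2 * rHom x ^ 3 - rHom x) x := by
  have hc2 : HasDerivAt (fun y => Real.cosh y ^ 2) (2 * Real.cosh x ^ 1 * Real.sinh x) x := by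
    exact ((Real.hasDerivAt_cosh x).pow 2).congr_deriv (by norm_num)
  have h := (Real.hasDerivAt_sinh x).div hc2 (pow_ne_zero 2 (cosh_ne x))
  have hnum : Real.cosh x * Real.cosh x ^ 2 - Real.sinh x * (2 * Real.cosh x ^ 1 * Real.sinh x)
      = 2 * Real.cosh x - Real.cosh x ^ 3 := by
    linear_combination (-2 * Real.cosh x) * Real.sinh_sq x
  rw [hnum] at h
  refine h.congr_deriv ?_
  symm
  unfold rHom
  have hc := cosh_ne x
  rw [eq_div_iff (pow_ne_zero 2 (pow_ne_zero 2 hc))]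
  field_simp

/-- H₀ vanishes on Γ₀ and the curve t ↦ Γ₀(u+t, θ+(ω/ε)t) solves the Hamiltonian
system of H₀ (with symplectic form dx₁∧dy₁ + dx₂∧dy₂, i.e. ẋ = ∂_y H₀, ẏ = -∂_x H₀). -/
theorem homoclinic_is_solution (ω ε : ℝ) (hω : 0 < ω) (hε : 0 < ε) (u θ : ℝ) :
    let X₁ : ℝ → ℝ := fun t => RHom (u + t) * Real.cos (θ + (ω/ε) * t)
    let X₂ : ℝ → ℝ := fun t => RHom (u + t) * Real.sin (θ + (ω/ε) * t)
    let Y₁ : ℝ → ℝ := fun t => rHom (u + t) * Real.cos (θ + (ω/ε) * t)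
    let Y₂ : ℝ → ℝ := fun t => rHom (u + t) * Real.sin (θ + (ω/ε) * t)
    (∀ t, H0 ω ε (X₁ t, X₂ t) (Y₁ t, Y₂ t) = 0) ∧
    ∀ t : ℝ,
      HasDerivAt X₁ (-(ω/ε) * X₂ t - Y₁ t + 2 * ((Y₁ t)^2 + (Y₂ t)^2) * Y₁ t) t ∧
      HasDerivAt X₂ ((ω/ε) * X₁ t - Y₂ t + 2 * ((Y₁ t)^2 + (Y₂ t)^2) * Y₂ t) t ∧
      HasDerivAt Y₁ (-((ω/ε) * Y₂ t + X₁ t)) t ∧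
      HasDerivAt Y₂ (-(-(ω/ε) * Y₁ t + X₂ t)) t := by
  intro X₁ X₂ Y₁ Y₂
  constructor
  · intro t
    have hcs : Real.sin (θ + ω/ε * t) ^ 2 + Real.cos (θ + ω/ε * t) ^ 2 = 1 :=
      Real.sin_sq_add_cos_sq _
    have main : RHom (u+t) ^ 2 - rHom (u+t) ^ 2 + rHom (u+t) ^ 4 = 0 := by
      unfold rHom RHom
      have hc := cosh_ne (u + t)
      rw [div_pow, Real.sinh_sq]
      field_simp
      ring
    simp only [X₁, X₂, Y₁, Y₂, H0]
    linear_combination (1/2 * (RHom (u+t)^2 - rHom (u+t)^2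
        + rHom (u+t)^4 * (Real.sin (θ + ω/ε * t)^2 + Real.cos (θ + ω/ε * t)^2 + 1))) * hcs
      + (1/2) * main
  · intro t
    have haff : HasDerivAt (fun t : ℝ => u + t) 1 t := (hasDerivAt_id t).const_add u
    have hang : HasDerivAt (fun t : ℝ => θ + (ω/ε) * t) (ω/ε) t := by
      simpa using ((hasDerivAt_id t).const_mul (ω/ε)).const_add θ
    have hr : HasDerivAt (fun t : ℝ => rHom (u + t)) (-RHom (u + t)) t := by
      exact ((hasDerivAt_rHom (u + t)).comp t haff).congr_deriv (by ring)
    have hR : HasDerivAt (fun t : ℝ => RHom (u + t)) (2 * rHom (u+t) ^ 3 - rHom (u+t)) t := by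
      exact ((hasDerivAt_RHom (u + t)).comp t haff).congr_deriv (by ring)
    have hcos : HasDerivAt (fun t : ℝ => Real.cos (θ + (ω/ε) * t))
        (-Real.sin (θ + (ω/ε) * t) * (ω/ε)) t := (Real.hasDerivAt_cos _).comp t hang
    have hsin : HasDerivAt (fun t : ℝ => Real.sin (θ + (ω/ε) * t))
        (Real.cos (θ + (ω/ε) * t) * (ω/ε)) t := (Real.hasDerivAt_sin _).comp t hang
    have hcs : Real.sin (θ + ω/ε * t) ^ 2 + Real.cos (θ + ω/ε * t) ^ 2 = 1 :=
      Real.sin_sq_add_cos_sq _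
    refine ⟨?_, ?_, ?_, ?_⟩
    · refine (hR.mul hcos).congr_deriv ?_
      symm
      simp only [X₂, Y₁, Y₂]
      linear_combination (2 * rHom (u+t)^3 * Real.cos (θ + ω/ε * t)) * hcs
    · refine (hR.mul hsin).congr_deriv ?_
      symm
      simp only [X₁, Y₁, Y₂]
      linear_combination (2 * rHom (u+t)^3 * Real.sin (θ + ω/ε * t)) * hcs
    · refine (hr.mul hcos).congr_deriv ?_
      symm
      simp only [X₁, Y₂]
      ring
    · refine (hr.mul hsin).congr_deriv ?_
      symm
      simp only [X₂, Y₁]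
      ring
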